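/- (McDiarmid's inequality / method of bounded differences.) Let X_1, ..., X_N be independent random variables, with X_i taking values in a measurable space 𝒳_i, and let f : 𝒳_1 × ⋯ × 𝒳_N → ℝ be a bounded measurable function such that for every index i and all choices of coordinates, changing only the i-th coordinate changes the value of f by at most c_i, i.e. |f(x_1,...,x_{i-1}, b, x_{i+1},...,x_N) − f(x_1,...,x_{i-1}, b', x_{i+1},...,x_N)| ≤ c_i for all b, b' ∈ 𝒳_i. Then for every t > 0: Pr( f(X_1,...,X_N) > E[f(X_1,...,X_N)] + t ) ≤ exp(−2t²/∑_{i=1}^N c_i²) and Pr( f(X_1,...,X_N) < E[f(X_1,...,X_N)] − t ) ≤ exp(−2t²/∑_{i=1}^N c_i²). -/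

import Mathlib

open MeasureTheory ProbabilityTheory

lemma logexp_bound {p : ℝ} (hp0 : 0 ≤ p) (hp1 : p ≤ 1) (h : ℝ) :
    Real.log (1 - p + p * Real.exp h) ≤ p * h + h ^ 2 / 8 := by
  have hq : ∀ x : ℝ, 0 < 1 - p + p * Real.exp x := by
    intro x
    rcases eq_or_lt_of_le hp0 with h0 | h0
    · rw [← h0]; norm_num
    · nlinarith [Real.exp_pos x, Real.exp_pos x]
  set φ : ℝ → ℝ := fun x => p * x + x ^ 2 / 8 - Real.log (1 - p + p * Real.exp x) with hφdef
  set D : ℝ → ℝ := fun x => p + x / 4 - p * Real.exp x / (1 - p + p * Real.exp x) with hDdef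
  have hq' : ∀ x : ℝ, HasDerivAt (fun x => 1 - p + p * Real.exp x) (p * Real.exp x) x := by
    intro x
    simpa using ((Real.hasDerivAt_exp x).const_mul p).const_add (1 - p)
  have hφ' : ∀ x, HasDerivAt φ (D x) x := by
    intro x
    have h2 : HasDerivAt (fun x => Real.log (1 - p + p * Real.exp x))
        (p * Real.exp x / (1 - p + p * Real.exp x)) x := (hq' x).log (ne_of_gt (hq x))
    have h3 : HasDerivAt (fun x : ℝ => p * x + x ^ 2 / 8) (p + x / 4) x := by
      have := ((hasDerivAt_id x).const_mul p).add
        (((hasDerivAt_pow 2 x)).div_const 8)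
      refine this.congr_deriv ?_
      norm_num
      ring
    exact h3.sub h2
  have hD' : ∀ x, HasDerivAt D
      (1 / 4 - p * Real.exp x * (1 - p) / (1 - p + p * Real.exp x) ^ 2) x := by
    intro x
    have h4 : HasDerivAt (fun x => p * Real.exp x / (1 - p + p * Real.exp x))
        ((p * Real.exp x * (1 - p + p * Real.exp x) -
          p * Real.exp x * (p * Real.exp x)) / (1 - p + p * Real.exp x) ^ 2) x :=
      ((Real.hasDerivAt_exp x).const_mul p).div (hq' x) (ne_of_gt (hq x))
    have h5 : HasDerivAt (fun x : ℝ => p + x / 4) (1 / 4) x := by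
      have := ((hasDerivAt_id x).div_const 4).const_add p
      exact this
    have heq : (p * Real.exp x * (1 - p + p * Real.exp x) -
          p * Real.exp x * (p * Real.exp x)) / (1 - p + p * Real.exp x) ^ 2 =
        p * Real.exp x * (1 - p) / (1 - p + p * Real.exp x) ^ 2 := by
      congr 1
      ring
    rw [heq] at h4
    exact h5.sub h4
  have hD'0 : ∀ x : ℝ, 0 ≤ 1 / 4 - p * Real.exp x * (1 - p) / (1 - p + p * Real.exp x) ^ 2 := by
    intro x
    have hqx := hq x
    have hex := Real.exp_pos x
    rw [sub_nonneg, div_le_iff₀ (by positivity)]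
    nlinarith [sq_nonneg (1 - p - p * Real.exp x)]
  have hDmono : Monotone D :=
    monotone_of_deriv_nonneg (fun x => (hD' x).differentiableAt)
      (fun x => by rw [(hD' x).deriv]; exact hD'0 x)
  have hD0 : D 0 = 0 := by simp [hDdef]
  have hφ0 : φ 0 = 0 := by simp [hφdef]
  have hφcont : Continuous φ := by
    have : Differentiable ℝ φ := fun x => (hφ' x).differentiableAt
    exact this.continuous
  have key : 0 ≤ φ h := by
    rcases le_total 0 h with hh | hh
    · have hmono : MonotoneOn φ (Set.Ici (0 : ℝ)) := by
        apply monotoneOn_of_deriv_nonneg (convex_Ici 0) hφcont.continuousOn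
          (fun x _ => (hφ' x).differentiableAt.differentiableWithinAt)
        intro x hx
        rw [(hφ' x).deriv]
        rw [interior_Ici] at hx
        have := hDmono (le_of_lt hx)
        rwa [hD0] at this
      have := hmono Set.self_mem_Ici (Set.mem_Ici.mpr hh) hh
      rwa [hφ0] at this
    · have hanti : AntitoneOn φ (Set.Iic (0 : ℝ)) := by
        apply antitoneOn_of_deriv_nonpos (convex_Iic 0) hφcont.continuousOn
          (fun x _ => (hφ' x).differentiableAt.differentiableWithinAt)
        intro x hx
        rw [(hφ' x).deriv]
        rw [interior_Iic] at hx
        have := hDmono (le_of_lt hx)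
        rw [hD0] at this
        exact this
      have := hanti (Set.mem_Iic.mpr hh) Set.self_mem_Iic hh
      rwa [hφ0] at this
  have : Real.log (1 - p + p * Real.exp h) ≤ p * h + h ^ 2 / 8 := by
    have := key
    simp only [hφdef] at this
    linarith
  exact this

lemma integrable_of_bdd {α : Type*} [MeasurableSpace α] {μ : Measure α} [IsFiniteMeasure μ]
    {g : α → ℝ} (hm : AEStronglyMeasurable g μ) {M : ℝ} (h : ∀ x, |g x| ≤ M) :
    Integrable g μ :=
  Integrable.mono' (integrable_const M) hm (Filter.Eventually.of_forall (by simpa using h))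

/-- Hoeffding's lemma, integral form. -/
lemma hoeffding_lemma {α : Type*} [MeasurableSpace α] {μ : Measure α} [IsProbabilityMeasure μ]
    {g : α → ℝ} (hg : Measurable g) {M : ℝ} (hbdd : ∀ x, |g x| ≤ M)
    {c : ℝ} (hc : 0 ≤ c) (hosc : ∀ x y, g x - g y ≤ c)
    (hint : ∫ x, g x ∂μ = 0) (s : ℝ) :
    ∫ x, Real.exp (s * g x) ∂μ ≤ Real.exp (s ^ 2 * c ^ 2 / 8) := by
  have hne : Nonempty α := by
    by_contra hne
    simp only [not_nonempty_iff] at hne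
    have : μ Set.univ = 0 := by simp [Set.univ_eq_empty_iff.mpr hne]
    simp [measure_univ] at this
  have hgint : Integrable g μ := integrable_of_bdd hg.aestronglyMeasurable hbdd
  set b : ℝ := sSup (Set.range g) with hbdef
  have hrne : (Set.range g).Nonempty := Set.range_nonempty g
  have hbdda : BddAbove (Set.range g) := by
    refine ⟨M, ?_⟩
    rintro _ ⟨x, rfl⟩
    exact (abs_le.mp (hbdd x)).2
  have hgle : ∀ x, g x ≤ b := fun x => le_csSup hbdda ⟨x, rfl⟩
  have hgge : ∀ x, b - c ≤ g x := by
    intro x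
    have : b ≤ g x + c := by
      apply csSup_le hrne
      rintro _ ⟨y, rfl⟩
      linarith [hosc y x]
    linarith
  set a : ℝ := b - c with hadef
  have hab : a ≤ b := by linarith
  -- a ≤ 0 ≤ b from mean zero
  have ha0 : a ≤ 0 := by
    have : ∫ x, (a : ℝ) ∂μ ≤ ∫ x, g x ∂μ :=
      integral_mono (integrable_const a) hgint (fun x => hgge x)
    simpa [hint] using this
  have hb0 : 0 ≤ b := by
    have : ∫ x, g x ∂μ ≤ ∫ x, (b : ℝ) ∂μ :=
      integral_mono hgint (integrable_const b) (fun x => hgle x)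
    simpa [hint] using this
  rcases eq_or_lt_of_le hc with hc0 | hc0
  · -- c = 0 : g ≡ 0
    have hg0 : ∀ x, g x = 0 := by
      intro x
      have h1 := hgge x
      have h2 := hgle x
      have : a = b := by rw [hadef, ← hc0]; ring
      -- a ≤ 0 ≤ b, a = b so a = b = 0
      nlinarith [hgge x, hgle x]
    simp only [hg0, mul_zero, Real.exp_zero]
    rw [integral_const]
    simp [Real.exp_nonneg, Real.one_le_exp_iff]
    positivity
  · -- c > 0
    set p : ℝ := -a / c with hpdef
    have hp0 : 0 ≤ p := by
      apply div_nonneg _ (le_of_lt hc0)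
      linarith
    have hp1 : p ≤ 1 := by
      rw [hpdef, div_le_one hc0]
      linarith
    -- pointwise convexity bound
    have hconv : ∀ x, Real.exp (s * g x) ≤
        (b - g x) / c * Real.exp (s * a) + (g x - a) / c * Real.exp (s * b) := by
      intro x
      have hθ0 : 0 ≤ (b - g x) / c := div_nonneg (by linarith [hgle x]) (le_of_lt hc0)
      have hθ1 : 0 ≤ (g x - a) / c := div_nonneg (by linarith [hgge x]) (le_of_lt hc0)
      have hθs : (b - g x) / c + (g x - a) / c = 1 := by
        field_simp
        rw [hadef]; ring
      have hcvx := convexOn_exp.2 (Set.mem_univ (s * a)) (Set.mem_univ (s * b)) hθ0 hθ1 hθs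
      have harg : (b - g x) / c * (s * a) + (g x - a) / c * (s * b) = s * g x := by
        rw [hadef]
        field_simp
        ring
      calc Real.exp (s * g x)
          = Real.exp ((b - g x) / c * (s * a) + (g x - a) / c * (s * b)) := by rw [harg]
        _ ≤ (b - g x) / c * Real.exp (s * a) + (g x - a) / c * Real.exp (s * b) := by
            simpa [smul_eq_mul] using hcvx
    -- integrate
    have hexpint : Integrable (fun x => Real.exp (s * g x)) μ := by
      apply integrable_of_bdd ((Real.measurable_exp.comp (hg.const_mul s)).aestronglyMeasurable) (M := Real.exp (|s| * M))
      intro x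
      simp only [Function.comp]
      rw [abs_of_pos (Real.exp_pos _)]
      apply Real.exp_le_exp.mpr
      calc s * g x ≤ |s * g x| := le_abs_self _
        _ = |s| * |g x| := abs_mul s (g x)
        _ ≤ |s| * M := by
            apply mul_le_mul_of_nonneg_left (hbdd x) (abs_nonneg s)
    have hi1 : Integrable (fun x => (b - g x) / c * Real.exp (s * a)) μ := by
      exact ((((integrable_const b).sub hgint)).div_const c).mul_const _
    have hi2 : Integrable (fun x => (g x - a) / c * Real.exp (s * b)) μ := by
      exact (((hgint.sub (integrable_const a))).div_const c).mul_const _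
    have hrhsint : Integrable (fun x =>
        (b - g x) / c * Real.exp (s * a) + (g x - a) / c * Real.exp (s * b)) μ := hi1.add hi2
    have hI : ∫ x, Real.exp (s * g x) ∂μ ≤
        b / c * Real.exp (s * a) + (-a) / c * Real.exp (s * b) := by
      calc ∫ x, Real.exp (s * g x) ∂μ
          ≤ ∫ x, ((b - g x) / c * Real.exp (s * a) + (g x - a) / c * Real.exp (s * b)) ∂μ :=
            integral_mono hexpint hrhsint hconv
        _ = b / c * Real.exp (s * a) + (-a) / c * Real.exp (s * b) := by
            rw [integral_add hi1 hi2, integral_mul_const, integral_mul_const,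
               integral_div, integral_div,
               integral_sub (integrable_const b) hgint,
               integral_sub hgint (integrable_const a), hint, integral_const]
            simp
    -- identify with the log-mgf expression
    set h : ℝ := s * c with hhdef
    have hcne : c ≠ 0 := ne_of_gt hc0
    have h1p : 1 - p = b / c := by
      rw [hpdef, hadef]
      field_simp
      ring
    have hsa : s * a = -p * h := by
      rw [hpdef, hhdef]
      field_simp
    have hsb : s * b = -p * h + h := by
      rw [hpdef, hhdef, hadef]
      field_simp
      ring
    have hkey : b / c * Real.exp (s * a) + -a / c * Real.exp (s * b) =
        Real.exp (-p * h) * (1 - p + p * Real.exp h) := by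
      rw [hsa, hsb, Real.exp_add, hpdef]
      field_simp
      ring
    have hpos : 0 < 1 - p + p * Real.exp h := by
      rcases eq_or_lt_of_le hp0 with e | l
      · rw [← e]; norm_num
      · nlinarith [Real.exp_pos h]
    have hlog : 1 - p + p * Real.exp h ≤ Real.exp (p * h + h ^ 2 / 8) :=
      (Real.log_le_iff_le_exp hpos).mp (logexp_bound hp0 hp1 h)
    calc ∫ x, Real.exp (s * g x) ∂μ
        ≤ b / c * Real.exp (s * a) + -a / c * Real.exp (s * b) := hI
      _ = Real.exp (-p * h) * (1 - p + p * Real.exp h) := hkey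
      _ ≤ Real.exp (-p * h) * Real.exp (p * h + h ^ 2 / 8) := by
          exact mul_le_mul_of_nonneg_left hlog (le_of_lt (Real.exp_pos _))
      _ = Real.exp (s ^ 2 * c ^ 2 / 8) := by
          rw [← Real.exp_add]
          congr 1
          rw [hhdef]
          ring


lemma abs_integral_le {α : Type*} [MeasurableSpace α] {μ : Measure α} [IsProbabilityMeasure μ]
    {g : α → ℝ} {C : ℝ} (h : ∀ x, |g x| ≤ C) : |∫ x, g x ∂μ| ≤ C := by
  have := norm_integral_le_of_norm_le_const (μ := μ) (f := g) (C := C)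
    (Filter.Eventually.of_forall (by simpa using h))
  simpa [measure_univ] using this

section cons

variable {N : ℕ} {𝒳 : Fin (N + 1) → Type*} [∀ i, MeasurableSpace (𝒳 i)]

lemma measurable_fin_cons :
    Measurable (fun p : 𝒳 0 × (∀ i : Fin N, 𝒳 i.succ) => Fin.cons p.1 p.2 : _ → ∀ i, 𝒳 i) := by
  rw [measurable_pi_iff]
  intro i
  refine Fin.cases ?_ ?_ i
  · simpa using measurable_fst
  · intro j
    simp
    exact (measurable_pi_apply j).comp measurable_snd

lemma update_cons_zero (a a' : 𝒳 0) (y : ∀ i : Fin N, 𝒳 i.succ) :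
    Function.update (Fin.cons a y : ∀ i, 𝒳 i) 0 a' = Fin.cons a' y := by
  funext j
  refine Fin.cases ?_ ?_ j
  · simp
  · intro k
    rw [Function.update_of_ne (Fin.succ_ne_zero k)]
    simp

lemma cons_update (a : 𝒳 0) (y : ∀ i : Fin N, 𝒳 i.succ) (i : Fin N) (b : 𝒳 i.succ) :
    (Fin.cons a (Function.update y i b) : ∀ i, 𝒳 i) =
      Function.update (Fin.cons a y) i.succ b := by
  funext j
  refine Fin.cases ?_ ?_ j
  · rw [Function.update_of_ne (Fin.succ_ne_zero i).symm]
    simp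
  · intro k
    rcases eq_or_ne k i with rfl | hk
    · simp
    · rw [Function.update_of_ne (fun hc => hk (Fin.succ_injective _ hc))]
      simp [Function.update_of_ne hk]

lemma pi_eq_map_cons (μ : ∀ i, Measure (𝒳 i)) [∀ i, IsProbabilityMeasure (μ i)] :
    Measure.pi μ = Measure.map (fun p : 𝒳 0 × (∀ i : Fin N, 𝒳 i.succ) => Fin.cons p.1 p.2)
      ((μ 0).prod (Measure.pi fun i => μ i.succ)) := by
  refine Measure.pi_eq ?_
  intro s hs
  rw [Measure.map_apply measurable_fin_cons (MeasurableSet.univ_pi hs)]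
  have : (fun p : 𝒳 0 × (∀ i : Fin N, 𝒳 i.succ) => (Fin.cons p.1 p.2 : ∀ i, 𝒳 i)) ⁻¹'
      Set.pi Set.univ s = (s 0) ×ˢ Set.pi Set.univ (fun i : Fin N => s i.succ) := by
    ext p
    simp only [Set.mem_preimage, Set.mem_pi, Set.mem_univ, forall_true_left, Set.mem_prod]
    constructor
    · intro hp
      exact ⟨by simpa using hp 0, fun i => by simpa using hp i.succ⟩
    · rintro ⟨h0, hsucc⟩ i
      refine Fin.cases ?_ ?_ i
      · simpa using h0
      · intro k
        simpa using hsucc k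
  rw [this, Measure.prod_prod, Measure.pi_pi, Fin.prod_univ_succ]

end cons

/-- MGF tensorization for bounded differences on a product space. -/
lemma mgf_bound (N : ℕ) : ∀ (𝒳 : Fin N → Type*) [∀ i, MeasurableSpace (𝒳 i)]
    (μ : ∀ i, Measure (𝒳 i)) (_ : ∀ i, IsProbabilityMeasure (μ i))
    (f : (∀ i, 𝒳 i) → ℝ) (_ : Measurable f) (M : ℝ) (_ : ∀ x, |f x| ≤ M)
    (c : Fin N → ℝ) (_ : ∀ i, 0 ≤ c i)
    (_ : ∀ (i : Fin N) (x : ∀ j, 𝒳 j) (b b' : 𝒳 i),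
      |f (Function.update x i b) - f (Function.update x i b')| ≤ c i)
    (s : ℝ),
    ∫ x, Real.exp (s * (f x - ∫ y, f y ∂(Measure.pi μ))) ∂(Measure.pi μ) ≤
      Real.exp (s ^ 2 * (∑ i, (c i) ^ 2) / 8) := by
  induction N with
  | zero =>
    intro 𝒳 _ μ hprob f hf M hM c hc hdiff s
    haveI : ∀ i, IsProbabilityMeasure (μ i) := hprob
    have hconst : ∀ x : ∀ i, 𝒳 i, f x = f (fun i => i.elim0) := by
      intro x
      congr 1
      funext i
      exact i.elim0
    simp only [hconst]
    rw [integral_const]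
    simp only [measure_univ, ENNReal.toReal_one, smul_eq_mul, one_mul, sub_self, mul_zero,
      Real.exp_zero]
    rw [integral_const]
    simp only [measure_univ, ENNReal.toReal_one, smul_eq_mul, one_mul]
    simp
  | succ N ih =>
    intro 𝒳 _ μ hprob f hf M hM c hc hdiff s
    haveI : ∀ i, IsProbabilityMeasure (μ i) := hprob
    set μpi := Measure.pi μ with hpidef
    set ν := Measure.pi (fun i : Fin N => μ i.succ) with hνdef
    set m := ∫ y, f y ∂μpi with hmdef
    set cons : 𝒳 0 × (∀ i : Fin N, 𝒳 i.succ) → ∀ i, 𝒳 i :=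
      fun p => Fin.cons p.1 p.2 with hconsdef
    have hconsm : Measurable cons := measurable_fin_cons
    have hpieq : μpi = Measure.map cons ((μ 0).prod ν) := pi_eq_map_cons μ
    have hFm : Measurable (fun p : 𝒳 0 × (∀ i : Fin N, 𝒳 i.succ) => f (cons p)) :=
      hf.comp hconsm
    have hconsleft : ∀ y : ∀ i : Fin N, 𝒳 i.succ, Measurable (fun a : 𝒳 0 => cons (a, y)) := by
      intro y
      exact hconsm.comp (measurable_id.prodMk measurable_const)
    set g : (∀ i : Fin N, 𝒳 i.succ) → ℝ := fun y => ∫ a, f (cons (a, y)) ∂(μ 0) with hgdef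
    have hgm : Measurable g := by
      apply Measurable.stronglyMeasurable at hFm
      exact hFm.integral_prod_left'.measurable
    have hgbdd : ∀ y, |g y| ≤ M := fun y => abs_integral_le (fun a => hM _)
    -- integrability of the main integrand over the product
    have hexpbd : ∀ p : 𝒳 0 × (∀ i : Fin N, 𝒳 i.succ),
        |Real.exp (s * (f (cons p) - m))| ≤ Real.exp (|s| * (M + |m|)) := by
      intro p
      rw [abs_of_pos (Real.exp_pos _)]
      apply Real.exp_le_exp.mpr
      calc s * (f (cons p) - m) ≤ |s * (f (cons p) - m)| := le_abs_self _
        _ = |s| * |f (cons p) - m| := abs_mul _ _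
        _ ≤ |s| * (M + |m|) := by
            apply mul_le_mul_of_nonneg_left _ (abs_nonneg s)
            calc |f (cons p) - m| ≤ |f (cons p)| + |m| := abs_sub _ _
              _ ≤ M + |m| := by have := hM (cons p); linarith
    have hintP : Integrable (fun p => Real.exp (s * (f (cons p) - m))) ((μ 0).prod ν) :=
      integrable_of_bdd ((Real.measurable_exp.comp ((hFm.sub measurable_const).const_mul s)).aestronglyMeasurable) hexpbd
    have hfP : Integrable (fun p => f (cons p)) ((μ 0).prod ν) :=
      integrable_of_bdd hFm.aestronglyMeasurable (fun p => hM _)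
    -- m = ∫ g dν
    have hm_eq : ∫ y, g y ∂ν = m := by
      rw [hmdef, hpieq, integral_map hconsm.aemeasurable hf.aestronglyMeasurable]
      rw [integral_prod_symm _ hfP]
    -- inner Hoeffding bound
    have hinner : ∀ y, ∫ a, Real.exp (s * (f (cons (a, y)) - m)) ∂(μ 0) ≤
        Real.exp (s ^ 2 * (c 0) ^ 2 / 8) * Real.exp (s * (g y - m)) := by
      intro y
      have hfac : ∀ a : 𝒳 0, Real.exp (s * (f (cons (a, y)) - m)) =
          Real.exp (s * (f (cons (a, y)) - g y)) * Real.exp (s * (g y - m)) := by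
        intro a
        rw [← Real.exp_add]
        congr 1
        ring
      simp only [hfac]
      rw [integral_mul_const]
      apply mul_le_mul_of_nonneg_right _ (le_of_lt (Real.exp_pos _))
      -- apply Hoeffding's lemma to a ↦ f (cons (a, y)) - g y
      have hcm : Measurable (fun a : 𝒳 0 => f (cons (a, y)) - g y) :=
        (hf.comp (hconsleft y)).sub measurable_const
      have hint0 : Integrable (fun a : 𝒳 0 => f (cons (a, y))) (μ 0) :=
        integrable_of_bdd (hf.comp (hconsleft y)).aestronglyMeasurable (fun a => hM _)
      have hmean : ∫ a, (f (cons (a, y)) - g y) ∂(μ 0) = 0 := by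
        rw [integral_sub hint0 (integrable_const _), integral_const]
        simp [hgdef]
      have hbd2 : ∀ a, |f (cons (a, y)) - g y| ≤ M + M := by
        intro a
        calc |f (cons (a, y)) - g y| ≤ |f (cons (a, y))| + |g y| := abs_sub _ _
          _ ≤ M + M := add_le_add (hM _) (hgbdd y)
      have hosc : ∀ a a' : 𝒳 0, (f (cons (a, y)) - g y) - (f (cons (a', y)) - g y) ≤ c 0 := by
        intro a a'
        have h1 : cons (a, y) = Function.update (cons (a', y)) 0 a := by
          rw [hconsdef]
          exact (update_cons_zero a' a y).symm
        have h2 : cons (a', y) = Function.update (cons (a', y)) 0 a' := by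
          rw [hconsdef]
          exact (update_cons_zero a' a' y).symm
        have := hdiff 0 (cons (a', y)) a a'
        rw [← h1, ← h2] at this
        have := le_of_abs_le this
        linarith
      have := hoeffding_lemma hcm hbd2 (hc 0) hosc hmean s
      simpa using this
    -- outer integral
    have hinnerbd : ∀ y, |∫ a, Real.exp (s * (f (cons (a, y)) - m)) ∂(μ 0)| ≤
        Real.exp (|s| * (M + |m|)) :=
      fun y => abs_integral_le (fun a => hexpbd (a, y))
    have hinnerm : Measurable (fun y => ∫ a, Real.exp (s * (f (cons (a, y)) - m)) ∂(μ 0)) := by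
      have : Measurable (fun p : 𝒳 0 × (∀ i : Fin N, 𝒳 i.succ) =>
          Real.exp (s * (f (cons p) - m))) :=
        Real.measurable_exp.comp ((hFm.sub measurable_const).const_mul s)
      exact this.stronglyMeasurable.integral_prod_left'.measurable
    have hgexpbd : ∀ y, |Real.exp (s ^ 2 * (c 0) ^ 2 / 8) * Real.exp (s * (g y - m))| ≤
        Real.exp (s ^ 2 * (c 0) ^ 2 / 8) * Real.exp (|s| * (M + |m|)) := by
      intro y
      rw [abs_of_pos (by positivity)]
      apply mul_le_mul_of_nonneg_left _ (le_of_lt (Real.exp_pos _))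
      apply Real.exp_le_exp.mpr
      calc s * (g y - m) ≤ |s * (g y - m)| := le_abs_self _
        _ = |s| * |g y - m| := abs_mul _ _
        _ ≤ |s| * (M + |m|) := by
            apply mul_le_mul_of_nonneg_left _ (abs_nonneg s)
            calc |g y - m| ≤ |g y| + |m| := abs_sub _ _
              _ ≤ M + |m| := by have := hgbdd y; linarith
    have hgexpint : Integrable
        (fun y => Real.exp (s ^ 2 * (c 0) ^ 2 / 8) * Real.exp (s * (g y - m))) ν :=
      integrable_of_bdd ((measurable_const.mul (Real.measurable_exp.comp
        ((hgm.sub measurable_const).const_mul s))).aestronglyMeasurable) hgexpbd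
    have hinnerint : Integrable (fun y => ∫ a, Real.exp (s * (f (cons (a, y)) - m)) ∂(μ 0)) ν :=
      integrable_of_bdd hinnerm.aestronglyMeasurable hinnerbd
    -- bounded differences for g
    have hgdiff : ∀ (i : Fin N) (y : ∀ j : Fin N, 𝒳 j.succ) (b b' : 𝒳 i.succ),
        |g (Function.update y i b) - g (Function.update y i b')| ≤ c i.succ := by
      intro i y b b'
      have hint1 : Integrable (fun a : 𝒳 0 => f (cons (a, Function.update y i b))) (μ 0) :=
        integrable_of_bdd (hf.comp (hconsleft _)).aestronglyMeasurable (fun a => hM _)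
      have hint2 : Integrable (fun a : 𝒳 0 => f (cons (a, Function.update y i b'))) (μ 0) :=
        integrable_of_bdd (hf.comp (hconsleft _)).aestronglyMeasurable (fun a => hM _)
      have : g (Function.update y i b) - g (Function.update y i b') =
          ∫ a, (f (cons (a, Function.update y i b)) - f (cons (a, Function.update y i b'))) ∂(μ 0) := by
        rw [integral_sub hint1 hint2]
      rw [this]
      apply abs_integral_le
      intro a
      have h1 : cons (a, Function.update y i b) =
          Function.update (cons (a, y)) i.succ b := cons_update a y i b
      have h2 : cons (a, Function.update y i b') =
          Function.update (cons (a, y)) i.succ b' := cons_update a y i b'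
      rw [h1, h2]
      exact hdiff i.succ (cons (a, y)) b b'
    -- apply IH to g
    have hIH := ih (fun i : Fin N => 𝒳 i.succ) (fun i => μ i.succ) (fun i => inferInstance)
      g hgm M hgbdd (fun i => c i.succ) (fun i => hc i.succ) hgdiff s
    rw [← hνdef, hm_eq] at hIH
    -- combine
    calc ∫ x, Real.exp (s * (f x - m)) ∂μpi
        = ∫ p, Real.exp (s * (f (cons p) - m)) ∂((μ 0).prod ν) := by
          rw [hpieq, integral_map hconsm.aemeasurable]
          exact (Real.measurable_exp.comp ((hf.sub measurable_const).const_mul s)).aestronglyMeasurable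
      _ = ∫ y, ∫ a, Real.exp (s * (f (cons (a, y)) - m)) ∂(μ 0) ∂ν :=
          integral_prod_symm _ hintP
      _ ≤ ∫ y, Real.exp (s ^ 2 * (c 0) ^ 2 / 8) * Real.exp (s * (g y - m)) ∂ν :=
          integral_mono hinnerint hgexpint hinner
      _ = Real.exp (s ^ 2 * (c 0) ^ 2 / 8) * ∫ y, Real.exp (s * (g y - m)) ∂ν :=
          integral_const_mul _ _
      _ ≤ Real.exp (s ^ 2 * (c 0) ^ 2 / 8) *
            Real.exp (s ^ 2 * (∑ i : Fin N, (c i.succ) ^ 2) / 8) :=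
          mul_le_mul_of_nonneg_left hIH (le_of_lt (Real.exp_pos _))
      _ = Real.exp (s ^ 2 * (∑ i : Fin (N + 1), (c i) ^ 2) / 8) := by
          rw [← Real.exp_add, Fin.sum_univ_succ]
          congr 1
          ring

/-- The joint law of independent random variables is the product of the marginals. -/
lemma map_eq_pi {Ω : Type*} [MeasureSpace Ω] [IsProbabilityMeasure (ℙ : Measure Ω)]
    {N : ℕ} {𝒳 : Fin N → Type*} [∀ i, MeasurableSpace (𝒳 i)]
    {X : ∀ i, Ω → 𝒳 i} (hmeas : ∀ i, Measurable (X i))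
    (hind : iIndepFun X ℙ) :
    Measure.map (fun ω i => X i ω) ℙ = Measure.pi (fun i => Measure.map (X i) ℙ) := by
  haveI : ∀ i, IsProbabilityMeasure (Measure.map (X i) ℙ) :=
    fun i => Measure.isProbabilityMeasure_map (hmeas i).aemeasurable
  refine Eq.symm (Measure.pi_eq ?_)
  intro s hs
  have hXm : Measurable (fun ω i => X i ω) := measurable_pi_lambda _ hmeas
  rw [Measure.map_apply hXm (MeasurableSet.univ_pi hs)]
  have hpre : (fun ω i => X i ω) ⁻¹' Set.pi Set.univ s = ⋂ i ∈ Finset.univ, X i ⁻¹' s i := by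
    ext ω
    simp [Set.mem_pi]
  rw [hpre, hind.measure_inter_preimage_eq_mul Finset.univ (fun i _ => hs i)]
  refine Finset.prod_congr rfl (fun i _ => ?_)
  rw [Measure.map_apply (hmeas i) (hs i)]

/-- Chernoff-type tail bound from the MGF bound, on the product space. -/
lemma tail_bound {N : ℕ} {𝒳 : Fin N → Type*} [∀ i, MeasurableSpace (𝒳 i)]
    (μ : ∀ i, Measure (𝒳 i)) [hprob : ∀ i, IsProbabilityMeasure (μ i)]
    (f : (∀ i, 𝒳 i) → ℝ) (hf : Measurable f) (M : ℝ) (hM : ∀ x, |f x| ≤ M)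
    (c : Fin N → ℝ) (hc : ∀ i, 0 ≤ c i)
    (hdiff : ∀ (i : Fin N) (x : ∀ j, 𝒳 j) (b b' : 𝒳 i),
      |f (Function.update x i b) - f (Function.update x i b')| ≤ c i)
    (hcpos : 0 < ∑ i, (c i) ^ 2) (t : ℝ) (ht : 0 < t) :
    (Measure.pi μ) {x | (∫ y, f y ∂(Measure.pi μ)) + t < f x} ≤
      ENNReal.ofReal (Real.exp (-2 * t ^ 2 / ∑ i, (c i) ^ 2)) := by
  set μpi := Measure.pi μ with hpidef
  set m := ∫ y, f y ∂μpi with hmdef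
  set V := ∑ i, (c i) ^ 2 with hVdef
  set s := 4 * t / V with hsdef
  have hs0 : 0 < s := by positivity
  have hintexp : Integrable (fun x => Real.exp (s * (f x - m))) μpi := by
    apply integrable_of_bdd (by
      exact (Real.measurable_exp.comp ((hf.sub measurable_const).const_mul s)).aestronglyMeasurable)
      (M := Real.exp (|s| * (M + |m|)))
    intro x
    rw [abs_of_pos (Real.exp_pos _)]
    apply Real.exp_le_exp.mpr
    calc s * (f x - m) ≤ |s * (f x - m)| := le_abs_self _
      _ = |s| * |f x - m| := abs_mul _ _
      _ ≤ |s| * (M + |m|) := by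
          apply mul_le_mul_of_nonneg_left _ (abs_nonneg s)
          calc |f x - m| ≤ |f x| + |m| := abs_sub _ _
            _ ≤ M + |m| := by have := hM x; linarith
  have hmgf := mgf_bound N 𝒳 μ hprob f hf M hM c hc hdiff s
  rw [← hpidef, ← hmdef, ← hVdef] at hmgf
  -- Chernoff
  have hch := measure_ge_le_exp_mul_mgf (X := fun x => f x - m) (μ := μpi) (t := s) t
    (le_of_lt hs0) hintexp
  have hmono : μpi {x | m + t < f x} ≤ μpi {x | t ≤ f x - m} := by
    apply measure_mono
    intro x hx
    simp only [Set.mem_setOf_eq] at hx ⊢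
    linarith
  have hmgf' : mgf (fun x => f x - m) μpi s ≤ Real.exp (s ^ 2 * V / 8) := hmgf
  have hts : (μpi {x | t ≤ f x - m}).toReal ≤ Real.exp (-2 * t ^ 2 / V) := by
    calc (μpi {x | t ≤ f x - m}).toReal ≤ Real.exp (-s * t) * mgf (fun x => f x - m) μpi s := hch
      _ ≤ Real.exp (-s * t) * Real.exp (s ^ 2 * V / 8) :=
          mul_le_mul_of_nonneg_left hmgf' (le_of_lt (Real.exp_pos _))
      _ = Real.exp (-2 * t ^ 2 / V) := by
          rw [← Real.exp_add]
          congr 1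
          rw [hsdef]
          field_simp
          ring
  calc μpi {x | m + t < f x} ≤ μpi {x | t ≤ f x - m} := hmono
    _ ≤ ENNReal.ofReal (Real.exp (-2 * t ^ 2 / V)) := by
        rw [ENNReal.le_ofReal_iff_toReal_le (measure_ne_top _ _) (le_of_lt (Real.exp_pos _))]
        exact hts

/-- **McDiarmid's inequality** (method of bounded differences). -/
theorem mcdiarmid {Ω : Type*} [MeasureSpace Ω] [IsProbabilityMeasure (ℙ : Measure Ω)]
    (N : ℕ) (𝒳 : Fin N → Type*) [∀ i, MeasurableSpace (𝒳 i)]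
    (X : ∀ i, Ω → 𝒳 i)
    (hmeas : ∀ i, Measurable (X i))
    (hind : iIndepFun X ℙ)
    (f : (∀ i, 𝒳 i) → ℝ)
    (hf : Measurable f)
    (hbdd : ∃ M : ℝ, ∀ x, |f x| ≤ M)
    (c : Fin N → ℝ) (hc0 : ∀ i, 0 ≤ c i)
    (hdiff : ∀ (i : Fin N) (x : ∀ j, 𝒳 j) (b b' : 𝒳 i),
      |f (Function.update x i b) - f (Function.update x i b')| ≤ c i)
    (hcpos : 0 < ∑ i, (c i) ^ 2)
    (t : ℝ) (ht : 0 < t) :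
    ℙ {ω | f (fun i => X i ω) > (𝔼[fun ω => f (fun i => X i ω)]) + t} ≤
        ENNReal.ofReal (Real.exp (-2 * t ^ 2 / ∑ i, (c i) ^ 2)) ∧
    ℙ {ω | f (fun i => X i ω) < (𝔼[fun ω => f (fun i => X i ω)]) - t} ≤
        ENNReal.ofReal (Real.exp (-2 * t ^ 2 / ∑ i, (c i) ^ 2)) := by
  obtain ⟨M, hM⟩ := hbdd
  set T : Ω → ∀ i, 𝒳 i := fun ω i => X i ω with hTdef
  have hTm : Measurable T := measurable_pi_lambda _ hmeas
  set μpi := Measure.pi (fun i => Measure.map (X i) ℙ) with hpidef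
  haveI : ∀ i, IsProbabilityMeasure (Measure.map (X i) ℙ) :=
    fun i => Measure.isProbabilityMeasure_map (hmeas i).aemeasurable
  have hmap : Measure.map T ℙ = μpi := map_eq_pi hmeas hind
  have hE : 𝔼[fun ω => f (fun i => X i ω)] = ∫ y, f y ∂μpi := by
    rw [← hmap, integral_map hTm.aemeasurable hf.aestronglyMeasurable]
  set m := ∫ y, f y ∂μpi with hmdef
  constructor
  · have hset : {ω | f (fun i => X i ω) > (𝔼[fun ω => f (fun i => X i ω)]) + t} =
        T ⁻¹' {x | m + t < f x} := by
      ext ω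
      simp only [Set.mem_setOf_eq, Set.mem_preimage, hE, hTdef]
    rw [hset, ← Measure.map_apply hTm (measurableSet_lt measurable_const hf), hmap]
    exact tail_bound _ f hf M hM c hc0 hdiff hcpos t ht
  · have hdiff' : ∀ (i : Fin N) (x : ∀ j, 𝒳 j) (b b' : 𝒳 i),
        |(-f) (Function.update x i b) - (-f) (Function.update x i b')| ≤ c i := by
      intro i x b b'
      simp only [Pi.neg_apply, neg_sub_neg]
      rw [abs_sub_comm]
      exact hdiff i x b b'
    have hM' : ∀ x, |(-f) x| ≤ M := by
      intro x
      simp only [Pi.neg_apply, abs_neg]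
      exact hM x
    have hm' : ∫ y, -f y ∂μpi = -m := by
      rw [integral_neg]
    have hset : {ω | f (fun i => X i ω) < (𝔼[fun ω => f (fun i => X i ω)]) - t} =
        T ⁻¹' {x | (∫ y, -f y ∂μpi) + t < -f x} := by
      ext ω
      simp only [Set.mem_setOf_eq, Set.mem_preimage, hE, Pi.neg_apply, hm', hTdef]
      constructor <;> intro h <;> linarith
    have hms : MeasurableSet {x : ∀ i, 𝒳 i | (∫ y, -f y ∂μpi) + t < -f x} :=
      measurableSet_lt measurable_const hf.neg
    rw [hset, ← Measure.map_apply (s := {x | (∫ y, -f y ∂μpi) + t < -f x}) hTm hms, hmap]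
    exact tail_bound _ (-f) hf.neg M hM' c hc0 hdiff' hcpos t ht
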